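/- If W and V are independent nonnegative random variables each satisfying the NBUE property (E[W - t | W > t] ≤ E[W] for all t > 0), then their sum W + V also satisfies the NBUE property. -/

import Mathlib

open MeasureTheory

/-- A nonnegative random variable `W` is NBUE (New Better than Used in Expectation)
if for all `t > 0` with `P(W > t) > 0`, `E[W - t | W > t] ≤ E[W]`. -/
def NBUE {Ω : Type*} [MeasurableSpace Ω] (μ : Measure Ω) (W : Ω → ℝ) : Prop :=
  ∀ t : ℝ, 0 < t → μ {ω | t < W ω} ≠ 0 →
    (∫ ω in {ω | t < W ω}, (W ω - t) ∂μ) / (μ {ω | t < W ω}).toReal ≤ ∫ ω, W ω ∂μ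

open Set

/-- The set integral in the NBUE definition equals the integral of the positive part. -/
lemma nbue_setIntegral_eq {Ω : Type*} [MeasurableSpace Ω] (μ : Measure Ω) (f : Ω → ℝ)
    (hf : Measurable f) (t : ℝ) :
    ∫ ω in {ω | t < f ω}, (f ω - t) ∂μ = ∫ ω, max (f ω - t) 0 ∂μ := by
  rw [← integral_indicator (measurableSet_lt measurable_const hf)]
  congr 1
  funext ω
  by_cases h : ω ∈ {ω | t < f ω}
  · rw [Set.indicator_of_mem h]
    have : t < f ω := h
    exact (max_eq_left (by linarith)).symm
  · rw [Set.indicator_of_notMem h]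
    have : ¬ t < f ω := h
    exact (max_eq_right (by push_neg at this; linarith)).symm

lemma integrable_max_sub {Ω : Type*} [MeasurableSpace Ω] {μ : Measure Ω} [IsProbabilityMeasure μ]
    {f : Ω → ℝ} (hf : Measurable f) (hfi : Integrable f μ) (t : ℝ) :
    Integrable (fun ω => max (f ω - t) 0) μ := by
  refine Integrable.mono' (hfi.abs.add (integrable_const |t|))
    (((hf.sub measurable_const).max measurable_const).aestronglyMeasurable) ?_
  filter_upwards with ω
  rw [Real.norm_eq_abs, abs_of_nonneg (le_max_right _ _)]
  refine max_le ?_ (add_nonneg (abs_nonneg _) (abs_nonneg _))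
  calc f ω - t ≤ |f ω - t| := le_abs_self _
    _ ≤ |f ω| + |t| := abs_sub _ _

/-- From the NBUE property we get the basic integral bound. -/
lemma nbue_bound {Ω : Type*} [MeasurableSpace Ω] (μ : Measure Ω) [IsProbabilityMeasure μ]
    (f : Ω → ℝ) (hf : Measurable f) (hnn : ∀ ω, 0 ≤ f ω) (h : NBUE μ f)
    (t : ℝ) (ht : 0 < t) :
    ∫ ω, max (f ω - t) 0 ∂μ ≤ (∫ ω, f ω ∂μ) * (μ {ω | t < f ω}).toReal := by
  by_cases h0 : μ {ω | t < f ω} = 0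
  · have hz : ∀ᵐ ω ∂μ, max (f ω - t) 0 = 0 := by
      have hae : ∀ᵐ ω ∂μ, ¬ t < f ω := by
        rw [ae_iff]
        simpa using h0
      filter_upwards [hae] with ω hω
      exact max_eq_right (by push_neg at hω; linarith)
    rw [integral_congr_ae hz, integral_zero]
    exact mul_nonneg (integral_nonneg hnn) ENNReal.toReal_nonneg
  · have := h t ht h0
    rw [div_le_iff₀ (ENNReal.toReal_pos h0 (measure_ne_top _ _))] at this
    calc ∫ ω, max (f ω - t) 0 ∂μ = ∫ ω in {ω | t < f ω}, (f ω - t) ∂μ :=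
          (nbue_setIntegral_eq μ f hf t).symm
      _ ≤ _ := this

/-- Key per-value inequality: for every real `s`,
`E[(X - s)⁺] ≤ E[X] * P(X > s) + (-s)⁺` for a nonnegative "variable" with the NBUE-type
integral bound, expressed for a distribution `ν` on `ℝ`. -/
lemma aux_key (ν : Measure ℝ) [IsProbabilityMeasure ν] (hnn : ∀ᵐ w ∂ν, 0 ≤ w)
    (hint : Integrable (fun w => w) ν)
    (h1 : ∀ s : ℝ, 0 < s → ∫ w, max (w - s) 0 ∂ν ≤ (∫ w, w ∂ν) * (ν (Ioi s)).toReal) :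
    ∀ s : ℝ, ∫ w, max (w - s) 0 ∂ν ≤ (∫ w, w ∂ν) * (ν (Ioi s)).toReal + max (-s) 0 := by
  set C := ∫ w, w ∂ν with hC
  have hC0 : 0 ≤ C := integral_nonneg_of_ae hnn
  have hmaxint : ∀ s : ℝ, Integrable (fun w => max (w - s) 0) ν :=
    fun s => integrable_max_sub measurable_id hint s
  -- Lemma A: E[X] ≤ E[X] * P(X > s) for s ≤ 0.
  have lemA : ∀ s : ℝ, s ≤ 0 → C ≤ C * (ν (Ioi s)).toReal := by
    intro s hs
    have h2 : ∀ ε : ℝ, 0 < ε → C ≤ C * (ν (Ioi s)).toReal + ε := by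
      intro ε hε
      have hmono : (ν (Ioi ε)).toReal ≤ (ν (Ioi s)).toReal :=
        ENNReal.toReal_mono (measure_ne_top _ _)
          (measure_mono (Ioi_subset_Ioi (hs.trans hε.le)))
      have hle : C ≤ ∫ w, (max (w - ε) 0 + ε) ∂ν := by
        refine integral_mono hint ((hmaxint ε).add (integrable_const ε)) ?_
        intro w
        dsimp only
        have := le_max_left (w - ε) (0 : ℝ)
        linarith
      rw [integral_add (hmaxint ε) (integrable_const ε), integral_const, probReal_univ] at hle
      simp only [ENNReal.toReal_one, smul_eq_mul, one_mul] at hle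
      have h3 := h1 ε hε
      nlinarith [mul_le_mul_of_nonneg_left hmono hC0]
    have := le_of_forall_pos_le_add h2
    linarith
  intro s
  rcases le_or_gt s 0 with hs | hs
  · have hmax : (fun w => max (w - s) 0) =ᵐ[ν] fun w => w - s := by
      filter_upwards [hnn] with w hw
      exact max_eq_left (by linarith)
    rw [integral_congr_ae hmax, integral_sub hint (integrable_const s), integral_const,
      probReal_univ]
    simp only [ENNReal.toReal_one, smul_eq_mul, one_mul]
    have hA := lemA s hs
    have hms : max (-s) 0 = -s := max_eq_left (by linarith)
    rw [hms]
    linarith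
  · have h3 := h1 s hs
    have hms : max (-s) 0 = 0 := max_eq_right (by linarith)
    rw [hms]
    linarith

/-- If `W` and `V` are independent nonnegative NBUE random variables, then `W + V` is NBUE. -/
theorem nbue_add {Ω : Type*} [MeasurableSpace Ω] (μ : Measure Ω) [IsProbabilityMeasure μ]
    (W V : Ω → ℝ) (hWm : Measurable W) (hVm : Measurable V)
    (hWnn : ∀ ω, 0 ≤ W ω) (hVnn : ∀ ω, 0 ≤ V ω)
    (hWint : Integrable W μ) (hVint : Integrable V μ)
    (hindep : ProbabilityTheory.IndepFun W V μ)
    (hW : NBUE μ W) (hV : NBUE μ V) :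
    NBUE μ (fun ω => W ω + V ω) := by
  intro t ht hne
  have hSm : Measurable fun ω => W ω + V ω := hWm.add hVm
  set A := {ω | t < W ω + V ω} with hA
  have hAm : MeasurableSet A := measurableSet_lt measurable_const hSm
  have hApos : 0 < (μ A).toReal := ENNReal.toReal_pos hne (measure_ne_top _ _)
  rw [div_le_iff₀ hApos]
  have hC0 : 0 ≤ ∫ ω, W ω ∂μ := integral_nonneg hWnn
  have hD0 : 0 ≤ ∫ ω, V ω ∂μ := integral_nonneg hVnn
  set C := ∫ ω, W ω ∂μ with hCdef
  set D := ∫ ω, V ω ∂μ with hDdef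
  -- distributions
  set ν := μ.map W with hν
  set ρ := μ.map V with hρ
  have : IsProbabilityMeasure ν := Measure.isProbabilityMeasure_map hWm.aemeasurable
  have : IsProbabilityMeasure ρ := Measure.isProbabilityMeasure_map hVm.aemeasurable
  have hν_nn : ∀ᵐ w ∂ν, 0 ≤ w := by
    rw [hν]
    exact (ae_map_iff hWm.aemeasurable measurableSet_Ici).2 (Filter.Eventually.of_forall hWnn)
  have hν_int : Integrable (fun w => w) ν :=
    (integrable_map_measure aestronglyMeasurable_id hWm.aemeasurable).2 hWint
  have hν_eq : ∫ w, w ∂ν = C := integral_map hWm.aemeasurable aestronglyMeasurable_id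
  have hν_meas : ∀ s : ℝ, ν (Ioi s) = μ {ω | s < W ω} := by
    intro s
    rw [hν, Measure.map_apply hWm measurableSet_Ioi]
    rfl
  -- transferred NBUE bound for ν
  have h1 : ∀ s : ℝ, 0 < s → ∫ w, max (w - s) 0 ∂ν ≤ (∫ w, w ∂ν) * (ν (Ioi s)).toReal := by
    intro s hs
    have hmeq : ∫ w, max (w - s) 0 ∂ν = ∫ ω, max (W ω - s) 0 ∂μ :=
      integral_map hWm.aemeasurable
        (((continuous_id.sub continuous_const).max continuous_const).aestronglyMeasurable)
    rw [hmeq, hν_eq, hν_meas s]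
    exact nbue_bound μ W hWm hWnn hW s hs
  have hkey := aux_key ν hν_nn hν_int h1
  -- product measure
  have hpairm : Measurable fun ω => (V ω, W ω) := hVm.prodMk hWm
  have hmap : μ.map (fun ω => (V ω, W ω)) = ρ.prod ν :=
    (ProbabilityTheory.indepFun_iff_map_prod_eq_prod_map_map hVm.aemeasurable
      hWm.aemeasurable).1 hindep.symm
  have hcont : Continuous fun p : ℝ × ℝ => max (p.2 + p.1 - t) 0 :=
    ((continuous_snd.add continuous_fst).sub continuous_const).max continuous_const
  have hμint : Integrable (fun ω => max (W ω + V ω - t) 0) μ :=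
    integrable_max_sub hSm (hWint.add hVint) t
  have hprodint : Integrable (fun p : ℝ × ℝ => max (p.2 + p.1 - t) 0) (ρ.prod ν) := by
    rw [← hmap, integrable_map_measure hcont.aestronglyMeasurable hpairm.aemeasurable]
    exact hμint
  have hset : ∫ ω in A, (W ω + V ω - t) ∂μ = ∫ ω, max (W ω + V ω - t) 0 ∂μ :=
    nbue_setIntegral_eq μ (fun ω => W ω + V ω) hSm t
  have hfub : ∫ ω, max (W ω + V ω - t) 0 ∂μ
      = ∫ v, ∫ w, max (w + v - t) 0 ∂ν ∂ρ := by
    rw [← integral_prod _ hprodint, ← hmap,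
      integral_map hpairm.aemeasurable hcont.aestronglyMeasurable]
  -- measurability of the survival function
  have hB : MeasurableSet {p : ℝ × ℝ | t < p.2 + p.1} :=
    measurableSet_lt measurable_const (measurable_snd.add measurable_fst)
  have hIoi : ∀ v : ℝ, Prod.mk v ⁻¹' {p : ℝ × ℝ | t < p.2 + p.1} = Ioi (t - v) := by
    intro v
    ext w
    simp [Set.mem_Ioi, sub_lt_iff_lt_add]
  have hsm : Measurable fun v : ℝ => ν (Prod.mk v ⁻¹' {p : ℝ × ℝ | t < p.2 + p.1}) :=
    measurable_measure_prodMk_left hB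
  have hsurv_meas : Measurable fun v : ℝ => ν (Ioi (t - v)) := by
    simpa only [hIoi] using hsm
  have hsurv_int : Integrable (fun v : ℝ => (ν (Ioi (t - v))).toReal) ρ := by
    refine Integrable.mono' (integrable_const (1 : ℝ))
      hsurv_meas.ennreal_toReal.aestronglyMeasurable ?_
    filter_upwards with v
    rw [Real.norm_eq_abs, abs_of_nonneg ENNReal.toReal_nonneg]
    exact ENNReal.toReal_le_of_le_ofReal zero_le_one (by simpa using prob_le_one)
  have hmax_int_ρ : Integrable (fun v : ℝ => max (v - t) 0) ρ :=
    integrable_max_sub measurable_id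
      ((integrable_map_measure aestronglyMeasurable_id hVm.aemeasurable).2 hVint) t
  -- inner bound
  have hinner : ∀ v : ℝ, ∫ w, max (w + v - t) 0 ∂ν
      ≤ C * (ν (Ioi (t - v))).toReal + max (v - t) 0 := by
    intro v
    have := hkey (t - v)
    have heq : (fun w => max (w - (t - v)) 0) = fun w => max (w + v - t) 0 := by
      funext w; ring_nf
    have heq2 : -(t - v) = v - t := by ring
    rw [heq, heq2, hν_eq] at this
    exact this
  have hmono_int : ∫ v, ∫ w, max (w + v - t) 0 ∂ν ∂ρ
      ≤ ∫ v, (C * (ν (Ioi (t - v))).toReal + max (v - t) 0) ∂ρ := by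
    refine integral_mono ?_ ((hsurv_int.const_mul C).add hmax_int_ρ) hinner
    exact hprodint.integral_prod_left
  -- identify ∫ survival with μ A
  have hAeq : μ A = (ρ.prod ν) {p : ℝ × ℝ | t < p.2 + p.1} := by
    rw [← hmap, Measure.map_apply hpairm hB]
    rfl
  have hsurv_eq : ∫ v, (ν (Ioi (t - v))).toReal ∂ρ = (μ A).toReal := by
    rw [hAeq, Measure.prod_apply hB]
    rw [← integral_toReal]
    · congr 1
      funext v
      rw [hIoi v]
    · exact hsm.aemeasurable
    · filter_upwards with v
      exact measure_lt_top _ _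
  -- V-part bound
  have hVmap : ∫ v, max (v - t) 0 ∂ρ = ∫ ω, max (V ω - t) 0 ∂μ :=
    integral_map hVm.aemeasurable
      (((continuous_id.sub continuous_const).max continuous_const).aestronglyMeasurable)
  have hVbound : ∫ v, max (v - t) 0 ∂ρ ≤ D * (μ A).toReal := by
    rw [hVmap]
    calc ∫ ω, max (V ω - t) 0 ∂μ ≤ D * (μ {ω | t < V ω}).toReal :=
          nbue_bound μ V hVm hVnn hV t ht
      _ ≤ D * (μ A).toReal := by
          refine mul_le_mul_of_nonneg_left ?_ hD0
          refine ENNReal.toReal_mono (measure_ne_top _ _) (measure_mono ?_)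
          intro ω hω
          have h1 : t < V ω := hω
          have h2 : 0 ≤ W ω := hWnn ω
          show t < W ω + V ω
          linarith
  -- put it together
  have hsplit : ∫ v, (C * (ν (Ioi (t - v))).toReal + max (v - t) 0) ∂ρ
      = C * (μ A).toReal + ∫ v, max (v - t) 0 ∂ρ := by
    rw [integral_add (hsurv_int.const_mul C) hmax_int_ρ, integral_const_mul, hsurv_eq]
  have hsum : ∫ ω, (W ω + V ω) ∂μ = C + D := integral_add hWint hVint
  calc ∫ ω in A, (W ω + V ω - t) ∂μ
      = ∫ v, ∫ w, max (w + v - t) 0 ∂ν ∂ρ := by rw [hset, hfub]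
    _ ≤ C * (μ A).toReal + ∫ v, max (v - t) 0 ∂ρ := by rw [← hsplit]; exact hmono_int
    _ ≤ C * (μ A).toReal + D * (μ A).toReal := by linarith
    _ = (∫ ω, (W ω + V ω) ∂μ) * (μ A).toReal := by rw [hsum]; ring
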